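/- For all integers k, r and s: F(k+r)·G(k−r+s) + F(k−r)·G(k+r+s) = 2·F(k)·G(k+s) + (−1)^{k+r+1}·F(r)²·(G(s+1) + G(s−1)). -/

import Mathlib

/-- Sign flip for zpow of -1. -/
lemma sgn_succ (m : ℤ) : (-1 : ℝ) ^ (m + 1) = -((-1 : ℝ) ^ m) := by
  rw [zpow_add_one₀ (by norm_num : (-1:ℝ) ≠ 0)]; ring

/-- Addition formula for a gibonacci sequence in a commutative ring. -/
lemma gib_add {R : Type*} [CommRing R] (F : ℤ → ℤ)
    (hF0 : F 0 = 0) (hF1 : F 1 = 1) (hF : ∀ n : ℤ, F n = F (n - 1) + F (n - 2))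
    (G : ℤ → R) (hG : ∀ n : ℤ, G n = G (n - 1) + G (n - 2)) :
    ∀ m n : ℤ, G (m + n) = (F m : R) * G (n + 1) + (F (m - 1) : R) * G n := by
  have hFm1 : F (-1) = 1 := by have := hF 1; simp [hF0] at this; omega
  intro m
  induction m using Int.induction_on with
  | zero =>
    intro n
    norm_num [hF0, hFm1]
  | succ i ih =>
    intro n
    have h1 : (i : ℤ) + 1 + n = i + (n + 1) := by ring
    rw [h1, ih (n + 1)]
    have h2 : G (n + 1 + 1) = G (n + 1) + G n := by
      have := hG (n + 2); simp only [show n+2-1 = n+1 by ring, show n+2-2 = (n:ℤ) by ring] at this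
      rw [show n+1+1 = n+2 by ring, this]
    have h3 : F ((i:ℤ) + 1) = F i + F (i - 1) := by
      have := hF (i + 1); simp only [show (i:ℤ)+1-1 = i by ring, show (i:ℤ)+1-2 = i-1 by ring] at this
      omega
    rw [h2, show (i:ℤ)+1-1 = i by ring, h3]
    push_cast; ring
  | pred i ih =>
    intro n
    have h1 : -(i : ℤ) - 1 + n = -i + (n - 1) := by ring
    rw [h1, ih (n - 1)]
    have h2 : G (n - 1) = G (n + 1) - G n := by
      have := hG (n + 1); simp only [show n+1-1 = (n:ℤ) by ring, show n+1-2 = n-1 by ring] at this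
      rw [this]; ring
    have h3 : F (-(i:ℤ)) = F (-i - 1) + F (-i - 2) := by
      have := hF (-i); omega
    rw [show n-1+1 = (n:ℤ) by ring, h2, h3, show -(i:ℤ)-1-1 = -i-2 by ring]
    push_cast; ring

/-- Negation formula for Fibonacci. -/
lemma fib_neg (F : ℤ → ℤ)
    (hF0 : F 0 = 0) (hF1 : F 1 = 1) (hF : ∀ n : ℤ, F n = F (n - 1) + F (n - 2)) :
    ∀ n : ℤ, ((F (-n) : ℝ) = (-1:ℝ) ^ (n + 1) * F n) ∧
      ((F (-n + 1) : ℝ) = (-1:ℝ) ^ n * F (n - 1)) := by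
  have hFm1 : F (-1) = 1 := by have := hF 1; simp [hF0] at this; omega
  intro n
  induction n using Int.induction_on with
  | zero => norm_num [hF0, hF1, hFm1]
  | succ i ih =>
    obtain ⟨hA, hB⟩ := ih
    constructor
    · have hrec : F (-(i:ℤ) + 1) = F (-i) + F (-(i+1)) := by
        have := hF (-i + 1)
        simp only [show -(i:ℤ)+1-1 = -i by ring, show -(i:ℤ)+1-2 = -(i+1) by ring] at this
        omega
      have hFi : F ((i:ℤ) + 1) = F i + F (i - 1) := by
        have := hF (i + 1)
        simp only [show (i:ℤ)+1-1 = i by ring, show (i:ℤ)+1-2 = i-1 by ring] at this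
        omega
      have : (F (-((i:ℤ)+1)) : ℝ) = (F (-(i:ℤ) + 1) : ℝ) - F (-(i:ℤ)) := by
        rw [hrec]; push_cast; ring
      rw [this, hA, hB, hFi, sgn_succ (i + 1), sgn_succ i]
      push_cast; ring
    · rw [show -((i:ℤ)+1)+1 = -i by ring, hA, show (i:ℤ)+1-1 = i by ring]
  | pred i ih =>
    obtain ⟨hA, hB⟩ := ih
    simp only [neg_neg] at hA hB
    have h1 : (-1:ℝ)^(-(i:ℤ)) = -((-1:ℝ)^(-(i:ℤ)-1)) := by
      have t := sgn_succ (-(i:ℤ)-1)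
      rw [show -(i:ℤ)-1+1 = -(i:ℤ) by ring] at t
      exact t
    have h2 : (-1:ℝ)^(-(i:ℤ)+1) = (-1:ℝ)^(-(i:ℤ)-1) := by
      rw [sgn_succ (-(i:ℤ)), h1]; ring
    constructor
    · rw [show -(-(i:ℤ)-1) = (i:ℤ)+1 by ring, show -(i:ℤ)-1+1 = -(i:ℤ) by ring]
      exact hB
    · have hrec1 : F ((i:ℤ)+2) = F ((i:ℤ)+1) + F (i:ℤ) := by
        have := hF ((i:ℤ)+2)
        simp only [show (i:ℤ)+2-1 = (i:ℤ)+1 by ring, show (i:ℤ)+2-2 = (i:ℤ) by ring] at this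
        omega
      have hrec2 : F (-(i:ℤ)) = F (-(i:ℤ)-1) + F (-(i:ℤ)-2) := by
        have := hF (-(i:ℤ))
        omega
      have hrec2' : (F (-(i:ℤ)) : ℝ) = (F (-(i:ℤ)-1) : ℝ) + (F (-(i:ℤ)-2) : ℝ) := by
        exact_mod_cast congrArg (fun x : ℤ => (x : ℝ)) hrec2
      rw [h1] at hB
      rw [h2] at hA
      rw [show -(-(i:ℤ)-1)+1 = (i:ℤ)+2 by ring, show -(i:ℤ)-1-1 = -(i:ℤ)-2 by ring, hrec1]
      push_cast
      rw [hA, hB]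
      linear_combination ((-1:ℝ)^(-(i:ℤ)-1)) * hrec2'

/-- Cassini's identity (shifted form). -/
lemma cassini (F : ℤ → ℤ)
    (hF0 : F 0 = 0) (hF1 : F 1 = 1) (hF : ∀ n : ℤ, F n = F (n - 1) + F (n - 2)) :
    ∀ k : ℤ, (F (k-1) : ℝ)^2 + (F k : ℝ) * F (k-1) - (F k : ℝ)^2 = (-1:ℝ)^k := by
  have hFm1 : F (-1) = 1 := by have := hF 1; simp [hF0] at this; omega
  intro k
  induction k using Int.induction_on with
  | zero => norm_num [hF0, hFm1]
  | succ i ih =>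
    have hFi : F ((i:ℤ) + 1) = F i + F (i - 1) := by
      have := hF (i + 1)
      simp only [show (i:ℤ)+1-1 = i by ring, show (i:ℤ)+1-2 = i-1 by ring] at this
      omega
    rw [show (i:ℤ)+1-1 = i by ring, hFi, sgn_succ i]
    push_cast
    linear_combination -ih
  | pred i ih =>
    have hFi : F (-(i:ℤ)) = F (-i - 1) + F (-i - 1 - 1) := by
      have := hF (-i)
      simp only [show -(i:ℤ)-1 = -i-1 by ring, show -(i:ℤ)-2 = -i-1-1 by ring] at this
      omega
    rw [show -(i:ℤ)-1-1 = -i-1-1 by ring] at *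
    rw [show ((-1:ℝ))^(-(i:ℤ)-1) = -((-1:ℝ))^(-(i:ℤ)) by rw [show -(i:ℤ) = (-i-1)+1 by ring, sgn_succ]; ring]
    rw [hFi] at ih
    push_cast at ih ⊢
    linear_combination -ih

theorem statement18 (F : ℤ → ℤ)
    (hF0 : F 0 = 0) (hF1 : F 1 = 1) (hF : ∀ n : ℤ, F n = F (n - 1) + F (n - 2))
    (G : ℤ → ℝ) (hG : ∀ n : ℤ, G n = G (n - 1) + G (n - 2))
    (k r s : ℤ) :
    (F (k + r) : ℝ) * G (k - r + s) + (F (k - r) : ℝ) * G (k + r + s) =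
      2 * (F k : ℝ) * G (k + s)
        + (-1 : ℝ) ^ (k + r + 1) * (F r : ℝ) ^ 2 * (G (s + 1) + G (s - 1)) := by
  have hFrec : ∀ n : ℤ, ((F n : ℝ)) = (F (n-1) : ℝ) + (F (n-2) : ℝ) := by
    intro n; exact_mod_cast congrArg (fun x : ℤ => (x : ℝ)) (hF n)
  have Fadd := gib_add F hF0 hF1 hF (fun n => (F n : ℝ)) hFrec
  beta_reduce at Fadd
  have Gadd := gib_add F hF0 hF1 hF G hG
  have neg := fib_neg F hF0 hF1 hF
  have cas := cassini F hF0 hF1 hF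
  have e1 : G (k - r + s) = (F (k-r):ℝ) * G (s+1) + (F (k-r-1):ℝ) * G s := Gadd (k-r) s
  have e2 : G (k + r + s) = (F (k+r):ℝ) * G (s+1) + (F (k+r-1):ℝ) * G s := Gadd (k+r) s
  have e3 : G (k + s) = (F k : ℝ) * G (s+1) + (F (k-1):ℝ) * G s := Gadd k s
  have e4 : G (s-1) = G (s+1) - G s := by
    have := hG (s+1)
    simp only [show s+1-1 = s by ring, show s+1-2 = s-1 by ring] at this
    linarith
  have fr1 : (F (r+1) : ℝ) = (F r : ℝ) + (F (r-1) : ℝ) := by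
    have := hFrec (r+1)
    simpa only [show r+1-1 = r by ring, show r+1-2 = r-1 by ring] using this
  have fk2 : (F (k-2) : ℝ) = (F k : ℝ) - (F (k-1) : ℝ) := by
    have := hFrec k; linarith
  have fnr : (F (-r) : ℝ) = -(((-1:ℝ)^r) * (F r : ℝ)) := by
    have := (neg r).1
    rw [sgn_succ] at this
    linarith [this]
  have fnr1 : (F (-r+1) : ℝ) = ((-1:ℝ)^r) * (F (r-1) : ℝ) := (neg r).2
  have f1 : (F (k+r) : ℝ) = (F k:ℝ) * ((F r:ℝ) + (F (r-1):ℝ)) + (F (k-1):ℝ) * (F r:ℝ) := by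
    have := Fadd k r; rw [fr1] at this; exact this
  have f2 : (F (k-r) : ℝ) = ((-1:ℝ)^r) * ((F k:ℝ) * (F (r-1):ℝ) - (F (k-1):ℝ) * (F r:ℝ)) := by
    have := Fadd k (-r)
    rw [show k + -r = k - r by ring, fnr, fnr1] at this
    rw [this]; ring
  have f3 : (F (k+r-1) : ℝ) = (F k:ℝ) * (F r:ℝ) + (F (k-1):ℝ) * (F (r-1):ℝ) := by
    have := Fadd (k-1) r
    rw [show k-1+r = k+r-1 by ring, fr1, show k-1-1 = k-2 by ring, fk2] at this
    rw [this]; ring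
  have f4 : (F (k-r-1) : ℝ) = ((-1:ℝ)^r) * ((F (k-1):ℝ) * (F (r-1):ℝ) - (F k:ℝ) * (F r:ℝ) + (F (k-1):ℝ) * (F r:ℝ)) := by
    have := Fadd (k-1) (-r)
    rw [show k-1 + -r = k-r-1 by ring, fnr, fnr1, show k-1-1 = k-2 by ring, fk2] at this
    rw [this]; ring
  have hd : (F (k-1):ℝ)^2 + (F k:ℝ) * (F (k-1):ℝ) - (F k:ℝ)^2 = (-1:ℝ)^k := cas k
  have he : (F (r-1):ℝ)^2 + (F r:ℝ) * (F (r-1):ℝ) - (F r:ℝ)^2 = (-1:ℝ)^r := cas r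
  have he2 : ((-1:ℝ)^r) * ((-1:ℝ)^r) = 1 := by
    rw [← zpow_add₀ (by norm_num : (-1:ℝ) ≠ 0), show r + r = 2*r by ring, zpow_mul]
    norm_num
  have hsign : (-1:ℝ)^(k+r+1) = -(((-1:ℝ)^k) * ((-1:ℝ)^r)) := by
    rw [sgn_succ, zpow_add₀ (by norm_num : (-1:ℝ) ≠ 0)]
  rw [e1, e2, e3, e4, f1, f2, f3, f4, hsign]
  set a := (F k : ℝ)
  set b := (F (k-1) : ℝ)
  set c := (F r : ℝ)
  set d := (F (r-1) : ℝ)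
  set ep := ((-1:ℝ)^r)
  set de := ((-1:ℝ)^k)
  set u := G (s+1)
  set v := G s
  linear_combination (2*u - 2*d^2*u*ep - 2*c*d*u*ep + c^2*v*ep) * hd
    + (-2*u*de*ep + 2*b^2*u*ep + 2*a*b*v*ep + 2*a*b*u*ep) * he
    + (-2*u*de + 2*b^2*u + 2*a*b*v + 2*a*b*u) * he2
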